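/- For any graph G, the intersection of all efficient zero forcing sets of G equals the intersection of Term(F) over all efficient sets of forces F of minimum zero forcing sets of G. -/

import Mathlib

open SimpleGraph

variable {V : Type*}

/-- One simultaneous round of the color change rule: all currently forceable
vertices become black. -/
def forceStep (G : SimpleGraph V) (S : Set V) : Set V :=
  S ∪ {w | ∃ v ∈ S, G.Adj v w ∧ ∀ u, G.Adj v u → u ∉ S → u = w}

/-- The (cumulative) set of black vertices after `t` simultaneous rounds,
starting from `B`; so `B^{(t)} = propSet G B t \ propSet G B (t-1)`. -/
def propSet (G : SimpleGraph V) (B : Set V) : ℕ → Set V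
  | 0 => B
  | t + 1 => forceStep G (propSet G B t)

/-- `B` is a zero forcing set of `G`. -/
def IsZFSet (G : SimpleGraph V) (B : Set V) : Prop := ∃ t, propSet G B t = Set.univ

/-- The zero forcing number `Z(G)`. -/
noncomputable def zfNum (G : SimpleGraph V) : ℕ :=
  sInf {n | ∃ B : Set V, IsZFSet G B ∧ B.ncard = n}

/-- `B` is a minimum zero forcing set of `G`. -/
def IsMinZFSet (G : SimpleGraph V) (B : Set V) : Prop := IsZFSet G B ∧ B.ncard = zfNum G

/-- The propagation time `pt(G,B)` of a zero forcing set `B`. -/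
noncomputable def ptSet (G : SimpleGraph V) (B : Set V) : ℕ :=
  sInf {t | propSet G B t = Set.univ}

/-- The minimum propagation time `pt(G)`. -/
noncomputable def ptMin (G : SimpleGraph V) : ℕ :=
  sInf (ptSet G '' {B | IsMinZFSet G B})

/-- The maximum propagation time `PT(G)`. -/
noncomputable def ptMax (G : SimpleGraph V) : ℕ :=
  sSup (ptSet G '' {B | IsMinZFSet G B})

/-- `IsChronList G S L` : starting from black set `S`, the list `L` is a valid
chronological list of forces, performed one at a time, ending with all
vertices black. -/
def IsChronList (G : SimpleGraph V) : Set V → List (V × V) → Prop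
  | S, [] => S = Set.univ
  | S, (v, w) :: L =>
      v ∈ S ∧ w ∉ S ∧ G.Adj v w ∧ (∀ u, G.Adj v u → u ∉ S → u = w) ∧
        IsChronList G (insert w S) L

/-- `F` is a set of forces of `B`: the unordered set of forces of some
chronological list of forces of `B`. -/
def IsForceSet (G : SimpleGraph V) (B : Set V) (F : Set (V × V)) : Prop :=
  ∃ L : List (V × V), IsChronList G B L ∧ {p | p ∈ L} = F

/-- The terminus of a set of forces: the vertices performing no force. -/
def termSet (F : Set (V × V)) : Set V := {v | ∀ w, (v, w) ∉ F}

/-- The reverse set of forces. -/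
def revSet (F : Set (V × V)) : Set (V × V) := (fun p : V × V => (p.2, p.1)) '' F

/-- The (cumulative) set of black vertices after `t` rounds when propagating
using only the forces in `F`, starting from `B`;
so `F^{(t)} = fpropSet G B F t \ fpropSet G B F (t-1)`. -/
def fpropSet (G : SimpleGraph V) (B : Set V) (F : Set (V × V)) : ℕ → Set V
  | 0 => B
  | t + 1 => fpropSet G B F t ∪
      {w | ∃ v, (v, w) ∈ F ∧ v ∈ fpropSet G B F t ∧ w ∉ fpropSet G B F t ∧
        ∀ u, G.Adj v u → u ∉ fpropSet G B F t → u = w}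

/-- The propagation time `pt(G,F)` of a set of forces `F` of `B`. -/
noncomputable def ptForces (G : SimpleGraph V) (B : Set V) (F : Set (V × V)) : ℕ :=
  sInf {t | fpropSet G B F t = Set.univ}

/-- `B` is an efficient zero forcing set of `G`. -/
def IsEffZFSet (G : SimpleGraph V) (B : Set V) : Prop :=
  IsMinZFSet G B ∧ ptSet G B = ptMin G

/-- `F` is an efficient set of forces of the minimum zero forcing set `B`. -/
def IsEffForces (G : SimpleGraph V) (B : Set V) (F : Set (V × V)) : Prop :=
  IsMinZFSet G B ∧ IsForceSet G B F ∧ ptForces G B F = ptMin G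

section AuxLemmas

variable (G : SimpleGraph V)

lemma subset_forceStep (S : Set V) : S ⊆ forceStep G S := Set.subset_union_left

lemma propSet_mono (B : Set V) {s t : ℕ} (h : s ≤ t) : propSet G B s ⊆ propSet G B t := by
  induction t with
  | zero => rw [Nat.le_zero.mp h]
  | succ n ih =>
    rcases Nat.eq_or_lt_of_le h with rfl | h'
    · exact subset_rfl
    · exact (ih (Nat.lt_succ_iff.mp h')).trans (subset_forceStep G _)

lemma fpropSet_mono (B : Set V) (F : Set (V × V)) {s t : ℕ} (h : s ≤ t) :
    fpropSet G B F s ⊆ fpropSet G B F t := by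
  induction t with
  | zero => rw [Nat.le_zero.mp h]
  | succ n ih =>
    rcases Nat.eq_or_lt_of_le h with rfl | h'
    · exact subset_rfl
    · exact (ih (Nat.lt_succ_iff.mp h')).trans Set.subset_union_left

lemma fprop_subset_prop (B : Set V) (F : Set (V × V))
    (hadj : ∀ q ∈ F, G.Adj q.1 q.2) : ∀ t, fpropSet G B F t ⊆ propSet G B t := by
  intro t; induction t with
  | zero => exact subset_rfl
  | succ n ih =>
    intro w hw
    rcases hw with hw | ⟨v, hvF, hv, hw, hcond⟩
    · exact (subset_forceStep G _) (ih hw)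
    · exact Or.inr ⟨v, ih hv, hadj _ hvF, fun u hu hnu => hcond u hu (fun h' => hnu (ih h'))⟩

end AuxLemmas
section ChronLemmas

variable (G : SimpleGraph V)

def ChronTo (G : SimpleGraph V) : Set V → List (V × V) → Set V → Prop
  | S, [], T => S = T
  | S, (v, w) :: L, T =>
      v ∈ S ∧ w ∉ S ∧ G.Adj v w ∧ (∀ u, G.Adj v u → u ∉ S → u = w) ∧
        ChronTo G (insert w S) L T

lemma isChronList_iff_chronTo : ∀ (L : List (V × V)) (S : Set V),
    IsChronList G S L ↔ ChronTo G S L Set.univ := by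
  intro L
  induction L with
  | nil => intro S; exact Iff.rfl
  | cons q L ih =>
    intro S
    obtain ⟨v, w⟩ := q
    show (_ ∧ _ ∧ _ ∧ _ ∧ IsChronList G (insert w S) L) ↔ _
    rw [ih]
    exact Iff.rfl

lemma chronTo_append {S T U : Set V} : ∀ {L₁ L₂ : List (V × V)},
    ChronTo G S L₁ T → ChronTo G T L₂ U → ChronTo G S (L₁ ++ L₂) U := by
  intro L₁
  induction L₁ generalizing S with
  | nil => intro L₂ h1 h2; rw [show S = T from h1]; exact h2
  | cons q L ih =>
    obtain ⟨v, w⟩ := q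
    rintro L₂ ⟨hv, hw, hadj, hcond, htail⟩ h2
    exact ⟨hv, hw, hadj, hcond, ih htail h2⟩

lemma chron_target_not_mem {B : Set V} : ∀ {L : List (V × V)}, IsChronList G B L →
    ∀ q ∈ L, q.2 ∉ B := by
  intro L
  induction L generalizing B with
  | nil => simp
  | cons q L ih =>
    obtain ⟨v, w⟩ := q
    rintro ⟨hv, hw, hadj, hcond, htail⟩ q hq
    rcases List.mem_cons.mp hq with rfl | hq
    · exact hw
    · exact fun hB => ih htail q hq (Set.mem_insert_iff.mpr (Or.inr hB))

lemma chron_adj {B : Set V} : ∀ {L : List (V × V)}, IsChronList G B L →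
    ∀ q ∈ L, G.Adj q.1 q.2 := by
  intro L
  induction L generalizing B with
  | nil => simp
  | cons q L ih =>
    obtain ⟨v, w⟩ := q
    rintro ⟨hv, hw, hadj, hcond, htail⟩ q hq
    rcases List.mem_cons.mp hq with rfl | hq
    · exact hadj
    · exact ih htail q hq

lemma chron_cover {B : Set V} : ∀ {L : List (V × V)}, IsChronList G B L →
    ∀ x, x ∈ B ∨ ∃ v, (v, x) ∈ L := by
  intro L
  induction L generalizing B with
  | nil => intro h x; exact Or.inl (h ▸ Set.mem_univ x)
  | cons q L ih =>
    obtain ⟨v, w⟩ := q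
    rintro ⟨hv, hw, hadj, hcond, htail⟩ x
    rcases ih htail x with hx | ⟨v', hv'⟩
    · rcases Set.mem_insert_iff.mp hx with rfl | hx
      · exact Or.inr ⟨v, List.mem_cons_self⟩
      · exact Or.inl hx
    · exact Or.inr ⟨v', List.mem_cons_of_mem _ hv'⟩

lemma chron_target_inj {B : Set V} : ∀ {L : List (V × V)}, IsChronList G B L →
    ∀ a b w, (a, w) ∈ L → (b, w) ∈ L → a = b := by
  intro L
  induction L generalizing B with
  | nil => simp
  | cons q L ih =>
    obtain ⟨v₀, w₀⟩ := q
    rintro ⟨hv, hw, hadj, hcond, htail⟩ a b w ha hb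
    rcases List.mem_cons.mp ha with ha1 | ha1
    · rcases List.mem_cons.mp hb with hb1 | hb1
      · rw [Prod.mk.injEq] at ha1 hb1; rw [ha1.1, hb1.1]
      · exfalso
        rw [Prod.mk.injEq] at ha1
        obtain ⟨rfl, rfl⟩ := ha1
        exact chron_target_not_mem G htail (b, w) hb1 (Set.mem_insert _ _)
    · rcases List.mem_cons.mp hb with hb1 | hb1
      · exfalso
        rw [Prod.mk.injEq] at hb1
        obtain ⟨rfl, rfl⟩ := hb1
        exact chron_target_not_mem G htail (a, w) ha1 (Set.mem_insert _ _)
      · exact ih htail a b w ha1 hb1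

lemma chron_head_src {B : Set V} {v w : V} {L : List (V × V)}
    (h : IsChronList G B ((v, w) :: L)) : ∀ w', (v, w') ∈ L → False := by
  obtain ⟨hv, hw, hadj, hcond, htail⟩ := h
  intro w' hw'
  have h1 : w' ∉ insert w B := chron_target_not_mem G htail _ hw'
  have h2 : G.Adj v w' := chron_adj G htail _ hw'
  have h3 : w' = w := hcond w' h2 (fun hB => h1 (Set.mem_insert_iff.mpr (Or.inr hB)))
  exact h1 (h3 ▸ Set.mem_insert _ _)

lemma chron_source_inj {B : Set V} : ∀ {L : List (V × V)}, IsChronList G B L →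
    ∀ a w w', (a, w) ∈ L → (a, w') ∈ L → w = w' := by
  intro L
  induction L generalizing B with
  | nil => simp
  | cons q L ih =>
    obtain ⟨v₀, w₀⟩ := q
    intro h a w w' ha hb
    obtain ⟨hv, hw, hadj, hcond, htail⟩ := h
    rcases List.mem_cons.mp ha with ha1 | ha1
    · rcases List.mem_cons.mp hb with hb1 | hb1
      · rw [Prod.mk.injEq] at ha1 hb1; rw [ha1.2, hb1.2]
      · exfalso
        rw [Prod.mk.injEq] at ha1
        obtain ⟨rfl, rfl⟩ := ha1
        exact chron_head_src G ⟨hv, hw, hadj, hcond, htail⟩ w' hb1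
    · rcases List.mem_cons.mp hb with hb1 | hb1
      · exfalso
        rw [Prod.mk.injEq] at hb1
        obtain ⟨rfl, rfl⟩ := hb1
        exact chron_head_src G ⟨hv, hw, hadj, hcond, htail⟩ w ha1
      · exact ih htail a w w' ha1 hb1

lemma chron_step {B : Set V} : ∀ {L : List (V × V)}, IsChronList G B L →
    ∀ T : Set V, B ⊆ T → T ≠ Set.univ →
    ∃ v w, (v, w) ∈ L ∧ v ∈ T ∧ w ∉ T ∧ ∀ u, G.Adj v u → u ∉ T → u = w := by
  intro L
  induction L generalizing B with
  | nil => intro h T hBT hT; exact absurd (Set.eq_univ_of_univ_subset (h ▸ hBT)) hT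
  | cons q L ih =>
    obtain ⟨v, w⟩ := q
    rintro ⟨hv, hw, hadj, hcond, htail⟩ T hBT hT
    by_cases hwT : w ∈ T
    · obtain ⟨a, b, hab, h1, h2, h3⟩ := ih htail T
        (Set.insert_subset hwT hBT) hT
      exact ⟨a, b, List.mem_cons_of_mem _ hab, h1, h2, h3⟩
    · exact ⟨v, w, List.mem_cons_self, hBT hv, hwT,
        fun u hu hnu => hcond u hu (fun hB => hnu (hBT hB))⟩

end ChronLemmas
section ReachBuild

variable (G : SimpleGraph V)

lemma chron_reach [Finite V] {B : Set V} {L : List (V × V)} (h : IsChronList G B L) :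
    ∃ t, fpropSet G B {q | q ∈ L} t = Set.univ := by
  set F : Set (V × V) := {q | q ∈ L} with hF
  have key : ∀ n, fpropSet G B F n = Set.univ ∨ n ≤ (fpropSet G B F n).ncard := by
    intro n
    induction n with
    | zero => exact Or.inr (Nat.zero_le _)
    | succ n ih =>
      by_cases hu : fpropSet G B F n = Set.univ
      · exact Or.inl (Set.eq_univ_of_univ_subset (hu ▸ fpropSet_mono G B F (Nat.le_succ n)))
      rcases ih with h1 | h1
      · exact absurd h1 hu
      right
      obtain ⟨v, w, hmem, hv, hw, hcond⟩ := chron_step G h (fpropSet G B F n)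
        (show fpropSet G B F 0 ⊆ _ from fpropSet_mono G B F (Nat.zero_le n)) hu
      have hw' : w ∈ fpropSet G B F (n + 1) := Or.inr ⟨v, hmem, hv, hw, hcond⟩
      calc n + 1 ≤ (insert w (fpropSet G B F n)).ncard := by
            rw [Set.ncard_insert_of_notMem hw (Set.toFinite _)]; omega
        _ ≤ (fpropSet G B F (n + 1)).ncard :=
            Set.ncard_le_ncard (Set.insert_subset hw' (fpropSet_mono G B F (Nat.le_succ n)))
              (Set.toFinite _)
  rcases key (Nat.card V + 1) with h1 | h1
  · exact ⟨_, h1⟩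
  · exfalso
    have h2 : (fpropSet G B F (Nat.card V + 1)).ncard ≤ Nat.card V := by
      rw [← Set.ncard_univ]
      exact Set.ncard_le_ncard (Set.subset_univ _) (Set.toFinite _)
    omega

lemma round_aux (S : Set V) :
    ∀ (l : List V), l.Nodup →
      (∀ w ∈ l, ∃ v ∈ S, G.Adj v w ∧ ∀ u, G.Adj v u → u ∉ S → u = w) →
      ∀ S' : Set V, S ⊆ S' → (∀ w ∈ l, w ∉ S') →
      ∃ L : List (V × V), ChronTo G S' L (S' ∪ {x | x ∈ l}) ∧
        (∀ q ∈ L, q.1 ∈ S ∧ G.Adj q.1 q.2 ∧ q.2 ∈ l ∧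
          ∀ u, G.Adj q.1 u → u ∉ S → u = q.2) ∧
        (∀ w ∈ l, ∃ v, (v, w) ∈ L) := by
  intro l
  induction l with
  | nil =>
    intro _ _ S' _ _
    refine ⟨[], ?_, by simp, by simp⟩
    show S' = S' ∪ {x : V | x ∈ ([] : List V)}
    simp
  | cons w l ih =>
    intro hnd hforce S' hSS' hnotin
    obtain ⟨v, hvS, hadj, hcond⟩ := hforce w (List.mem_cons_self)
    obtain ⟨L, hL, hprop, hcover⟩ := ih (List.nodup_cons.mp hnd).2
      (fun x hx => hforce x (List.mem_cons_of_mem _ hx))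
      (insert w S') (hSS'.trans (Set.subset_insert _ _))
      (fun x hx => by
        intro hmem
        rcases Set.mem_insert_iff.mp hmem with rfl | hmem
        · exact (List.nodup_cons.mp hnd).1 hx
        · exact hnotin x (List.mem_cons_of_mem _ hx) hmem)
    have hsets : insert w S' ∪ {x | x ∈ l} = S' ∪ {x | x ∈ w :: l} := by
      ext x
      simp only [Set.mem_union, Set.mem_insert_iff, Set.mem_setOf_eq, List.mem_cons]
      tauto
    refine ⟨(v, w) :: L, ?_, ?_, ?_⟩
    · refine ⟨hSS' hvS, hnotin w (List.mem_cons_self), hadj,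
        fun u hu hunS' => hcond u hu (fun hS => hunS' (hSS' hS)), ?_⟩
      rw [← hsets]
      exact hL
    · rintro q hq
      rcases List.mem_cons.mp hq with rfl | hq
      · exact ⟨hvS, hadj, List.mem_cons_self, hcond⟩
      · obtain ⟨h1, h2, h3, h4⟩ := hprop q hq
        exact ⟨h1, h2, List.mem_cons_of_mem _ h3, h4⟩
    · intro x hx
      rcases List.mem_cons.mp hx with rfl | hx
      · exact ⟨v, List.mem_cons_self⟩
      · obtain ⟨v', hv'⟩ := hcover x hx
        exact ⟨v', List.mem_cons_of_mem _ hv'⟩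

lemma zfRound [Finite V] (S : Set V) : ∃ L : List (V × V),
    ChronTo G S L (forceStep G S) ∧
    (∀ q ∈ L, q.1 ∈ S ∧ q.2 ∉ S ∧ G.Adj q.1 q.2 ∧
      ∀ u, G.Adj q.1 u → u ∉ S → u = q.2) ∧
    ∀ w ∈ forceStep G S, w ∉ S → ∃ v, (v, w) ∈ L := by
  classical
  set N : Set V := forceStep G S \ S with hN
  set l : List V := N.toFinite.toFinset.toList with hl
  have hmem : ∀ x, x ∈ l ↔ x ∈ N := by
    intro x
    rw [hl, Finset.mem_toList, Set.Finite.mem_toFinset]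
  obtain ⟨L, hL, hprop, hcover⟩ := round_aux G S l (Finset.nodup_toList _)
    (fun w hw => by
      have hwN : w ∈ N := (hmem w).mp hw
      rcases hwN.1 with h | h
      · exact absurd h hwN.2
      · exact h)
    S subset_rfl (fun w hw => ((hmem w).mp hw).2)
  have hsets : S ∪ {x | x ∈ l} = forceStep G S := by
    ext x
    simp only [Set.mem_union, Set.mem_setOf_eq, hmem x, hN, Set.mem_diff]
    constructor
    · rintro (h | h)
      · exact subset_forceStep G S h
      · exact h.1
    · intro h
      by_cases hx : x ∈ S
      · exact Or.inl hx
      · exact Or.inr ⟨h, hx⟩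
  rw [hsets] at hL
  refine ⟨L, hL, ?_, ?_⟩
  · intro q hq
    obtain ⟨h1, h2, h3, h4⟩ := hprop q hq
    exact ⟨h1, ((hmem q.2).mp h3).2, h2, h4⟩
  · intro w hw hwS
    exact hcover w ((hmem w).mpr ⟨hw, hwS⟩)

lemma build [Finite V] {B : Set V} (hB : IsZFSet G B) :
    ∃ F, IsForceSet G B F ∧ ∀ t, fpropSet G B F t = propSet G B t := by
  classical
  choose Lf hLf₁ hLf₂ hLf₃ using fun S => zfRound G S
  have hne : {t | propSet G B t = Set.univ}.Nonempty := hB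
  set p := ptSet G B with hpdef
  have hp : propSet G B p = Set.univ := Nat.sInf_mem hne
  set L : List (V × V) := ((List.range p).map (fun t => Lf (propSet G B t))).flatten with hLdef
  have hchron : ∀ n, ChronTo G B
      (((List.range n).map (fun t => Lf (propSet G B t))).flatten) (propSet G B n) := by
    intro n
    induction n with
    | zero => show B = propSet G B 0; rfl
    | succ n ihn =>
      rw [List.range_succ, List.map_append, List.flatten_append]
      refine chronTo_append G ihn ?_
      simpa [propSet] using hLf₁ (propSet G B n)
  have hLmem : ∀ q : V × V, q ∈ L ↔ ∃ t < p, q ∈ Lf (propSet G B t) := by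
    intro q
    simp only [hLdef, List.mem_flatten, List.mem_map, List.mem_range]
    constructor
    · rintro ⟨l', ⟨t, ht, rfl⟩, hq⟩
      exact ⟨t, ht, hq⟩
    · rintro ⟨t, ht, hq⟩
      exact ⟨_, ⟨t, ht, rfl⟩, hq⟩
  have hadj : ∀ q ∈ {q : V × V | q ∈ L}, G.Adj q.1 q.2 := by
    intro q hq
    obtain ⟨t, _, h⟩ := (hLmem q).mp hq
    exact (hLf₂ _ q h).2.2.1
  refine ⟨{q | q ∈ L}, ⟨L, ?_, rfl⟩, ?_⟩
  · rw [isChronList_iff_chronTo]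
    have := hchron p
    rwa [hp] at this
  · intro t
    induction t with
    | zero => rfl
    | succ t iht =>
      apply subset_antisymm (fprop_subset_prop G B _ hadj (t + 1))
      intro w hw
      by_cases hwt : w ∈ propSet G B t
      · exact Set.mem_union_left _ (iht ▸ hwt)
      · have htp : t < p := by
          by_contra hge
          push_neg at hge
          have huniv : propSet G B t = Set.univ :=
            Set.eq_univ_of_univ_subset (hp ▸ propSet_mono G B hge)
          exact hwt (huniv ▸ Set.mem_univ w)
        obtain ⟨v, hv⟩ := hLf₃ (propSet G B t) w hw hwt
        obtain ⟨h1, h2, h3, h4⟩ := hLf₂ (propSet G B t) (v, w) hv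
        refine Set.mem_union_right _ ⟨v, (hLmem _).mpr ⟨t, htp, hv⟩, ?_, ?_, ?_⟩
        · rw [iht]; exact h1
        · rw [iht]; exact hwt
        · intro u hu hnu
          rw [iht] at hnu
          exact h4 u hu hnu
end ReachBuild
section Reversal

variable (G : SimpleGraph V)

lemma rev_chron_aux : ∀ (L : List (V × V)) {B : Set V}, IsChronList G B L →
    ∀ D : Set V, D ⊆ B → (∀ d ∈ D, ∀ q ∈ L, ¬ G.Adj q.2 d) → (∀ q ∈ L, q.1 ∉ D) →
    ChronTo G (Set.univ \ (D ∪ {x | ∃ w, (x, w) ∈ L}))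
      ((L.map (fun q => (q.2, q.1))).reverse) (Set.univ \ D) := by
  intro L
  induction L with
  | nil =>
    intro B _ D _ _ _
    show Set.univ \ (D ∪ {x | ∃ w, (x, w) ∈ ([] : List (V × V))}) = Set.univ \ D
    simp
  | cons q L ih =>
    obtain ⟨v, w⟩ := q
    intro B h D hDB hDadj hDsrc
    have h' := h
    obtain ⟨hv, hw, hadj, hcond, htail⟩ := h
    have hvD : v ∉ D := hDsrc (v, w) (List.mem_cons_self)
    have hlist : (((v, w) :: L).map (fun q : V × V => (q.2, q.1))).reverse
        = (L.map (fun q : V × V => (q.2, q.1))).reverse ++ [(w, v)] := by simp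
    rw [hlist]
    have hmain := ih htail (D ∪ {v})
      (Set.union_subset (hDB.trans (Set.subset_insert _ _))
        (by intro x hx; rw [Set.mem_singleton_iff] at hx; subst hx
            exact Set.mem_insert_iff.mpr (Or.inr hv)))
      (by rintro d hd q hq
          rcases Set.mem_union .. |>.mp hd with hd | hd
          · exact hDadj d hd q (List.mem_cons_of_mem _ hq)
          · rw [Set.mem_singleton_iff] at hd; subst hd
            intro hadj'
            have h1 : q.2 ∉ insert w B := chron_target_not_mem G htail q hq
            have h2 : q.2 = w := hcond q.2 hadj'.symm
              (fun hB => h1 (Set.mem_insert_iff.mpr (Or.inr hB)))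
            exact h1 (h2 ▸ Set.mem_insert _ _))
      (by intro q hq
          intro hmem
          rcases Set.mem_union .. |>.mp hmem with hd | hd
          · exact hDsrc q (List.mem_cons_of_mem _ hq) hd
          · rw [Set.mem_singleton_iff] at hd
            obtain ⟨a, b⟩ := q
            simp only at hd
            subst hd
            exact chron_head_src G h' b hq)
    have hsets : D ∪ {x | ∃ w', (x, w') ∈ (v, w) :: L}
        = (D ∪ {v}) ∪ {x | ∃ w', (x, w') ∈ L} := by
      ext x
      simp only [Set.mem_union, Set.mem_setOf_eq, List.mem_cons, Prod.mk.injEq,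
        Set.mem_singleton_iff]
      constructor
      · rintro (hx | ⟨w', (⟨rfl, rfl⟩ | hmem)⟩)
        · exact Or.inl (Or.inl hx)
        · exact Or.inl (Or.inr rfl)
        · exact Or.inr ⟨w', hmem⟩
      · rintro ((hx | rfl) | ⟨w', hmem⟩)
        · exact Or.inl hx
        · exact Or.inr ⟨w, Or.inl ⟨rfl, rfl⟩⟩
        · exact Or.inr ⟨w', Or.inr hmem⟩
    rw [hsets]
    refine chronTo_append G hmain ?_
    refine ⟨?_, ?_, hadj.symm, ?_, ?_⟩
    · refine Set.mem_diff_of_mem (Set.mem_univ w) ?_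
      rintro (hwD | hwv)
      · exact hw (hDB hwD)
      · rw [Set.mem_singleton_iff] at hwv
        exact hadj.ne' hwv
    · rintro ⟨-, hvmem⟩
      exact hvmem (Or.inr rfl)
    · intro u hu hmem
      have humem : u ∈ D ∪ {v} := by
        by_contra hc
        exact hmem ⟨Set.mem_univ u, hc⟩
      rcases humem with hd | hd
      · exact absurd hu (hDadj u hd (v, w) (List.mem_cons_self))
      · exact hd
    · show insert v (Set.univ \ (D ∪ {v})) = Set.univ \ D
      have hvmem2 : v ∈ Set.univ \ D := ⟨Set.mem_univ v, hvD⟩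
      rw [← Set.diff_diff, Set.insert_diff_singleton, Set.insert_eq_self.mpr hvmem2]

lemma rev_isForceSet {B : Set V} {F : Set (V × V)} (h : IsForceSet G B F) :
    IsForceSet G (termSet F) (revSet F) := by
  obtain ⟨L, hL, rfl⟩ := h
  refine ⟨(L.map (fun q : V × V => (q.2, q.1))).reverse, ?_, ?_⟩
  · have hrc := rev_chron_aux G L hL ∅ (Set.empty_subset _) (by simp) (by simp)
    rw [isChronList_iff_chronTo]
    have hterm : termSet {q : V × V | q ∈ L} = Set.univ \ (∅ ∪ {x | ∃ w, (x, w) ∈ L}) := by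
      ext x
      simp only [termSet, Set.mem_setOf_eq, Set.mem_diff, Set.mem_univ, true_and,
        Set.empty_union, not_exists]
    rw [hterm]
    simpa using hrc
  · ext q
    simp only [List.mem_reverse, List.mem_map, Set.mem_setOf_eq, revSet, Set.mem_image]

lemma fprop_enter {B : Set V} {F : Set (V × V)}
    (htinj : ∀ v v' w, (v, w) ∈ F → (v', w) ∈ F → v = v') :
    ∀ (r : ℕ) (v w : V), (v, w) ∈ F → w ∈ fpropSet G B F r → w ∉ B →
    ∃ s, s + 1 ≤ r ∧ v ∈ fpropSet G B F s ∧ w ∉ fpropSet G B F s ∧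
      ∀ u, G.Adj v u → u ∉ fpropSet G B F s → u = w := by
  intro r
  induction r with
  | zero => intro v w _ hw hwB; exact absurd hw hwB
  | succ r ih =>
    intro v w hF hw hwB
    by_cases h1 : w ∈ fpropSet G B F r
    · obtain ⟨s, hs, rest⟩ := ih v w hF h1 hwB
      exact ⟨s, hs.trans (Nat.le_succ r), rest⟩
    · rcases hw with hw | ⟨v', hv'F, hv', hw', hcond⟩
      · exact absurd hw h1
      · have hvv : v' = v := htinj v' v w hv'F hF
        subst hvv
        exact ⟨r, le_rfl, hv', hw', hcond⟩

lemma rev_timing {B : Set V} {F : Set (V × V)}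
    (htinj : ∀ v v' w, (v, w) ∈ F → (v', w) ∈ F → v = v')
    (hB : ∀ v w, (v, w) ∈ F → w ∉ B) {p : ℕ}
    (hp : fpropSet G B F p = Set.univ) :
    fpropSet G (termSet F) (revSet F) p = Set.univ := by
  have inv : ∀ t, t ≤ p → ∀ x, (∀ y, (x, y) ∈ F → y ∉ fpropSet G B F (p - t)) →
      x ∈ fpropSet G (termSet F) (revSet F) t := by
    intro t
    induction t with
    | zero =>
      intro _ x hx
      show ∀ w, (x, w) ∉ F
      intro y hy
      exact hx y hy (by rw [Nat.sub_zero, hp]; trivial)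
    | succ t ih =>
      intro hle x hx
      have ht : t ≤ p := Nat.le_of_succ_le hle
      by_cases hxR : x ∈ fpropSet G (termSet F) (revSet F) t
      · exact fpropSet_mono G _ _ (Nat.le_succ t) hxR
      by_cases hcase : ∀ y, (x, y) ∈ F → y ∉ fpropSet G B F (p - t)
      · exact fpropSet_mono G _ _ (Nat.le_succ t) (ih ht x hcase)
      push_neg at hcase
      obtain ⟨y, hyF, hyA⟩ := hcase
      have hyA' : y ∉ fpropSet G B F (p - (t + 1)) := hx y hyF
      have hstep : ∀ s, s + 1 ≤ p - t → s ≤ p - (t + 1) := by omega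
      have hyR : y ∈ fpropSet G (termSet F) (revSet F) t := by
        apply ih ht y
        intro z hzF hzA
        obtain ⟨s, hs1, hys, -, -⟩ := fprop_enter G htinj (p - t) y z hzF hzA (hB y z hzF)
        exact hyA' (fpropSet_mono G B F (hstep s hs1) hys)
      refine Set.mem_union_right _ ⟨y, ⟨(x, y), hyF, rfl⟩, hyR, hxR, ?_⟩
      intro u hadj huR
      have hcu : ∃ z, (u, z) ∈ F ∧ z ∈ fpropSet G B F (p - t) := by
        by_contra hno
        push_neg at hno
        exact huR (ih ht u hno)
      obtain ⟨z, hzF, hzA⟩ := hcu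
      obtain ⟨s, hs1, hus, hzs, hcond⟩ := fprop_enter G htinj (p - t) u z hzF hzA (hB u z hzF)
      have hyz : y = z := hcond y hadj.symm
        (fun hys => hyA' (fpropSet_mono G B F (hstep s hs1) hys))
      subst hyz
      exact htinj u x y hzF hyF
  apply Set.eq_univ_of_forall
  intro x
  exact inv p le_rfl x (fun y hy => by rw [Nat.sub_self]; exact hB x y hy)

lemma term_ncard [Finite V] {B : Set V} {F : Set (V × V)}
    (htinj : ∀ v v' w, (v, w) ∈ F → (v', w) ∈ F → v = v')
    (hsinj : ∀ v w w', (v, w) ∈ F → (v, w') ∈ F → w = w')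
    (hB : ∀ v w, (v, w) ∈ F → w ∉ B)
    (hcover : ∀ x, x ∈ B ∨ ∃ v, (v, x) ∈ F) :
    (termSet F).ncard = B.ncard := by
  classical
  set srcs : Set V := {x | ∃ w, (x, w) ∈ F} with hsrcs
  set tgts : Set V := {w | ∃ v, (v, w) ∈ F} with htgts
  have hterm : termSet F = srcsᶜ := by
    ext x
    simp only [termSet, Set.mem_setOf_eq, hsrcs, Set.mem_compl_iff, not_exists]
  have htgt : tgts = Bᶜ := by
    ext x
    constructor
    · rintro ⟨v, hv⟩
      exact hB v x hv
    · intro hx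
      rcases hcover x with h | h
      · exact absurd h hx
      · exact h
  set f : V → V := fun x => if h : ∃ w, (x, w) ∈ F then h.choose else x with hfdef
  have hf : ∀ x ∈ srcs, (x, f x) ∈ F := by
    intro x hx
    have hfx : f x = hx.choose := by simp only [hfdef]; exact dif_pos hx
    rw [hfx]
    exact hx.choose_spec
  have himg : f '' srcs = tgts := by
    ext y
    constructor
    · rintro ⟨x, hx, rfl⟩
      exact ⟨x, hf x hx⟩
    · rintro ⟨v, hv⟩
      exact ⟨v, ⟨y, hv⟩, hsinj v (f v) y (hf v ⟨y, hv⟩) hv⟩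
  have hinj : Set.InjOn f srcs := fun a ha b hb hab =>
    htinj a b (f a) (hf a ha) (hab ▸ hf b hb)
  have h1 : tgts.ncard = srcs.ncard := by
    rw [← himg]
    exact Set.ncard_image_of_injOn hinj
  have h2 := Set.ncard_add_ncard_compl srcs
  have h3 := Set.ncard_add_ncard_compl B
  have h4 : Bᶜ.ncard = srcs.ncard := by rw [← htgt, h1]
  rw [hterm]
  omega

end Reversal
section Assembly

variable (G : SimpleGraph V)

lemma forceSet_facts {B : Set V} {F : Set (V × V)} (h : IsForceSet G B F) :
    (∀ v v' w, (v, w) ∈ F → (v', w) ∈ F → v = v') ∧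
    (∀ v w w', (v, w) ∈ F → (v, w') ∈ F → w = w') ∧
    (∀ v w, (v, w) ∈ F → w ∉ B) ∧
    (∀ q ∈ F, G.Adj q.1 q.2) ∧
    (∀ x, x ∈ B ∨ ∃ v, (v, x) ∈ F) := by
  obtain ⟨L, hL, rfl⟩ := h
  exact ⟨fun v v' w hv hv' => chron_target_inj G hL v v' w hv hv',
    fun v w w' hw hw' => chron_source_inj G hL v w w' hw hw',
    fun v w hvw => chron_target_not_mem G hL (v, w) hvw,
    fun q hq => chron_adj G hL q hq,
    fun x => chron_cover G hL x⟩

lemma eff_term [Finite V] {B : Set V} {F : Set (V × V)} (h : IsEffForces G B F) :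
    IsEffZFSet G (termSet F) := by
  obtain ⟨hmin, hforce, hpt⟩ := h
  obtain ⟨htinj, hsinj, hBt, hadj, hcover⟩ := forceSet_facts G hforce
  have hne : ∃ t, fpropSet G B F t = Set.univ := by
    obtain ⟨L, hL, hFL⟩ := hforce
    rw [← hFL]
    exact chron_reach G hL
  set p := ptForces G B F with hp0
  have hAp : fpropSet G B F p = Set.univ := Nat.sInf_mem hne
  have hRp := rev_timing G htinj hBt hAp
  have hradj : ∀ q ∈ revSet F, G.Adj q.1 q.2 := by
    rintro q ⟨⟨a, b⟩, hq, rfl⟩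
    exact (hadj _ hq).symm
  have hprop : propSet G (termSet F) p = Set.univ :=
    Set.eq_univ_of_univ_subset (hRp ▸ fprop_subset_prop G _ _ hradj p)
  have hminT : IsMinZFSet G (termSet F) :=
    ⟨⟨p, hprop⟩, (term_ncard htinj hsinj hBt hcover).trans hmin.2⟩
  refine ⟨hminT, ?_⟩
  have h1 : ptSet G (termSet F) ≤ p := Nat.sInf_le hprop
  have h2 : ptMin G ≤ ptSet G (termSet F) := Nat.sInf_le ⟨termSet F, hminT, rfl⟩
  omega

lemma ptSet_le_ptForces {B : Set V} {F : Set (V × V)}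
    (hadj : ∀ q ∈ F, G.Adj q.1 q.2) (hne : ∃ t, fpropSet G B F t = Set.univ) :
    ptSet G B ≤ ptForces G B F := by
  have hmem : fpropSet G B F (ptForces G B F) = Set.univ := Nat.sInf_mem hne
  exact Nat.sInf_le (Set.eq_univ_of_univ_subset
    (hmem ▸ fprop_subset_prop G B F hadj (ptForces G B F)))

lemma rev_eff [Finite V] {B : Set V} (h : IsEffZFSet G B) :
    ∃ F, IsEffForces G (termSet F) (revSet F) ∧ termSet (revSet F) = B := by
  obtain ⟨hmin, hpt⟩ := h
  obtain ⟨F, hforce, heq⟩ := build G hmin.1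
  obtain ⟨htinj, hsinj, hBt, hadj, hcover⟩ := forceSet_facts G hforce
  refine ⟨F, ?_, ?_⟩
  · have hptF : ptForces G B F = ptSet G B := by
      have hsets : {t | fpropSet G B F t = Set.univ} = {t | propSet G B t = Set.univ} := by
        ext t; simp only [Set.mem_setOf_eq, heq t]
      show sInf {t | fpropSet G B F t = Set.univ} = sInf {t | propSet G B t = Set.univ}
      rw [hsets]
    have hne : ∃ t, fpropSet G B F t = Set.univ := by
      obtain ⟨t, ht⟩ := hmin.1
      exact ⟨t, (heq t).trans ht⟩
    set p := ptForces G B F with hp0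
    have hAp : fpropSet G B F p = Set.univ := Nat.sInf_mem hne
    have hRp := rev_timing G htinj hBt hAp
    have hradj : ∀ q ∈ revSet F, G.Adj q.1 q.2 := by
      rintro q ⟨⟨a, b⟩, hq, rfl⟩
      exact (hadj _ hq).symm
    have hprop : propSet G (termSet F) p = Set.univ :=
      Set.eq_univ_of_univ_subset (hRp ▸ fprop_subset_prop G _ _ hradj p)
    have hminT : IsMinZFSet G (termSet F) :=
      ⟨⟨p, hprop⟩, (term_ncard htinj hsinj hBt hcover).trans hmin.2⟩
    refine ⟨hminT, rev_isForceSet G hforce, ?_⟩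
    have hle : ptForces G (termSet F) (revSet F) ≤ p := Nat.sInf_le hRp
    have hge2 : ptSet G (termSet F) ≤ ptForces G (termSet F) (revSet F) :=
      ptSet_le_ptForces G hradj ⟨p, hRp⟩
    have hge : ptMin G ≤ ptSet G (termSet F) := Nat.sInf_le ⟨termSet F, hminT, rfl⟩
    have hpm : p = ptMin G := hptF.trans hpt
    omega
  · ext x
    constructor
    · intro hx
      rcases hcover x with hxB | ⟨v, hv⟩
      · exact hxB
      · exact absurd (⟨(v, x), hv, rfl⟩ : (x, v) ∈ revSet F) (hx v)
    · intro hxB w hw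
      obtain ⟨⟨a, b⟩, hq, heqq⟩ := hw
      rw [Prod.mk.injEq] at heqq
      obtain ⟨rfl, rfl⟩ := heqq
      exact hBt _ _ hq hxB

end Assembly

/-- The intersection of all efficient zero forcing sets of `G` equals the
intersection of `Term(F)` over all efficient sets of forces `F` of minimum
zero forcing sets of `G`. -/
theorem inter_eff_eq_inter_term {V : Type*} [Finite V] (G : SimpleGraph V) :
    {v : V | ∀ B : Set V, IsEffZFSet G B → v ∈ B} =
      {v : V | ∀ (B : Set V) (F : Set (V × V)), IsEffForces G B F → v ∈ termSet F} := by
  ext v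
  simp only [Set.mem_setOf_eq]
  constructor
  · intro h B F hF
    exact h (termSet F) (eff_term G hF)
  · intro h B hB
    obtain ⟨F, hF, hFB⟩ := rev_eff G hB
    rw [← hFB]
    exact h (termSet F) (revSet F) hF
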